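/- arXiv:2012.15690 — 9 statements merged into one kernel-verified Lean document; each statement's English description precedes it below -/
import Mathlib

section
/- Let A and T be nonempty compact convex subsets of ℝⁿ and let s ≥ 0. Define Δ(s,A) := conv((A×{s}) ∪ ((A+sT)×{0})) ⊆ ℝⁿ⁺¹. Then Δ(s,A) = {(x,r) ∈ ℝⁿ×ℝ : 0 ≤ r ≤ s and x ∈ A + (s−r)·T}. -/
open Pointwise

/-- For nonempty compact convex `A, T ⊆ ℝⁿ` and `s ≥ 0`, the push-pull polytope
`Δ(s,A) = conv((A × {s}) ∪ ((A + s•T) × {0}))` equals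
`{(x, r) : 0 ≤ r ≤ s, x ∈ A + (s - r) • T}`. -/
theorem pushPull_eq_slices (n : ℕ) (A T : Set (Fin n → ℝ))
    (hAne : A.Nonempty) (hTne : T.Nonempty)
    (hAc : IsCompact A) (hTc : IsCompact T)
    (hAv : Convex ℝ A) (hTv : Convex ℝ T)
    (s : ℝ) (hs : 0 ≤ s) :
    convexHull ℝ ((A ×ˢ ({s} : Set ℝ)) ∪ ((A + s • T) ×ˢ ({0} : Set ℝ))) =
      {p : (Fin n → ℝ) × ℝ | 0 ≤ p.2 ∧ p.2 ≤ s ∧ p.1 ∈ A + (s - p.2) • T} := by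
  apply le_antisymm
  · -- convexHull ⊆ RHS : RHS is convex and contains the union
    apply convexHull_min
    · rintro ⟨x, r⟩ (⟨hxA, hr⟩ | ⟨hxA, hr⟩)
      · simp only [Set.mem_singleton_iff] at hr
        refine ⟨hr ▸ hs, hr.le, ?_⟩
        rw [hr]
        simp only [sub_self, zero_smul]
        rw [Set.zero_smul_set hTne]
        simpa using hxA
      · simp only [Set.mem_singleton_iff] at hr
        rw [hr]
        exact ⟨le_refl 0, hs, by simpa using hxA⟩
    · rintro ⟨x, r⟩ ⟨hr0, hrs, hx⟩ ⟨x', r'⟩ ⟨hr0', hrs', hx'⟩ a b ha hb hab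
      simp only [Set.mem_setOf_eq, Prod.smul_snd, Prod.snd_add, Prod.smul_fst,
        Prod.fst_add, smul_eq_mul] at *
      refine ⟨by positivity, ?_, ?_⟩
      · calc a * r + b * r' ≤ a * s + b * s := by
              apply add_le_add <;> apply mul_le_mul_of_nonneg_left <;> assumption
          _ = s := by rw [← add_mul, hab, one_mul]
      · obtain ⟨a1, ha1, u1, hu1, hxeq⟩ := hx
        obtain ⟨a2, ha2, u2, hu2, hxeq'⟩ := hx'
        obtain ⟨t1, ht1, rfl⟩ := hu1
        obtain ⟨t2, ht2, rfl⟩ := hu2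
        have key : (s - (a * r + b * r')) = a * (s - r) + b * (s - r') := by nlinarith
        have h1 : 0 ≤ a * (s - r) := mul_nonneg ha (by linarith)
        have h2 : 0 ≤ b * (s - r') := mul_nonneg hb (by linarith)
        rw [key, hTv.add_smul h1 h2]
        refine ⟨a • a1 + b • a2, hAv ha1 ha2 ha hb hab,
          (a * (s - r)) • t1 + (b * (s - r')) • t2,
          Set.add_mem_add ⟨t1, ht1, rfl⟩ ⟨t2, ht2, rfl⟩, ?_⟩
        simp only [Prod.smul_fst, Prod.fst_add]
        rw [← hxeq, ← hxeq']
        module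
  · -- RHS ⊆ convexHull
    rintro ⟨x, r⟩ ⟨hr0, hrs, hx⟩
    simp only [Set.mem_setOf_eq] at hx hr0 hrs
    obtain ⟨a0, ha0, u, hu, hxeq⟩ := hx
    obtain ⟨t, ht, rfl⟩ := hu
    by_cases hs0 : s = 0
    · have hr : r = 0 := le_antisymm (hs0 ▸ hrs) hr0
      apply subset_convexHull
      refine Or.inr ⟨⟨a0, ha0, s • t, ⟨t, ht, rfl⟩, ?_⟩, hr⟩
      rw [← hxeq]; rw [hs0, hr]; simp
    · have hspos : 0 < s := lt_of_le_of_ne hs (Ne.symm hs0)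
      have hm1 : ((a0, s) : (Fin n → ℝ) × ℝ) ∈
          (A ×ˢ ({s} : Set ℝ)) ∪ ((A + s • T) ×ˢ ({0} : Set ℝ)) :=
        Or.inl ⟨ha0, rfl⟩
      have hm2 : ((a0 + s • t, 0) : (Fin n → ℝ) × ℝ) ∈
          (A ×ˢ ({s} : Set ℝ)) ∪ ((A + s • T) ×ˢ ({0} : Set ℝ)) :=
        Or.inr ⟨Set.add_mem_add ha0 ⟨t, ht, rfl⟩, rfl⟩
      apply segment_subset_convexHull hm1 hm2
      refine ⟨r / s, 1 - r / s, div_nonneg hr0 hs, by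
        have : r / s ≤ 1 := (div_le_one hspos).mpr hrs
        linarith, by ring, ?_⟩
      have hrseq : (r / s) * s + (1 - r / s) * 0 = r := by field_simp; ring
      refine Prod.ext ?_ (by simpa using hrseq)
      simp only [Prod.smul_fst, Prod.fst_add]
      rw [← hxeq]
      have hc : (1 - r / s) * s = s - r := by field_simp
      rw [smul_add, smul_smul, hc]
      module
end

section
/- Let A, C, T be nonempty compact convex subsets of ℝⁿ and let s, t ≥ 0. For a nonempty compact convex set X and r ≥ 0 define Δ(r,X) := conv((X×{r}) ∪ ((X+rT)×{0})) ⊆ ℝⁿ⁺¹. Then Δ(s,A) + Δ(t,C) = Δ(s+t, A+C), where + on the left is Minkowski sum in ℝⁿ⁺¹. -/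
open Pointwise

lemma prod_singleton_add {E : Type*} [AddCommGroup E] (X Y : Set E) (a b : ℝ) :
    (X ×ˢ ({a} : Set ℝ)) + (Y ×ˢ ({b} : Set ℝ)) = (X + Y) ×ˢ ({a + b} : Set ℝ) := by
  ext ⟨p, r⟩
  simp only [Set.mem_add, Set.mem_prod, Set.mem_singleton_iff, Prod.exists, Prod.mk_add_mk,
    Prod.mk.injEq]
  constructor
  · rintro ⟨x, u, ⟨hx, rfl⟩, y, v, ⟨hy, rfl⟩, rfl, rfl⟩
    exact ⟨⟨x, hx, y, hy, rfl⟩, rfl⟩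
  · rintro ⟨⟨x, hx, y, hy, rfl⟩, rfl⟩
    exact ⟨x, a, ⟨hx, rfl⟩, y, b, ⟨hy, rfl⟩, rfl, rfl⟩

lemma mid_subset {E : Type*} [AddCommGroup E] [Module ℝ E]
    (D T : Set E) (s t : ℝ) (hs : 0 ≤ s) (ht : 0 ≤ t) :
    (D + t • T) ×ˢ ({s} : Set ℝ) ⊆
      convexHull ℝ ((D ×ˢ ({s + t} : Set ℝ)) ∪ ((D + (s + t) • T) ×ˢ ({0} : Set ℝ))) := by
  rintro ⟨p, r⟩ ⟨hp, hr⟩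
  simp only [Set.mem_singleton_iff] at hr
  subst r
  obtain ⟨x, hx, y, hy, rfl⟩ := hp
  obtain ⟨τ, hτ, rfl⟩ := hy
  rcases eq_or_lt_of_le (by positivity : (0:ℝ) ≤ s + t) with h | h
  · have hs0 : s = 0 := by linarith [hs, ht]
    have ht0 : t = 0 := by linarith
    apply subset_convexHull
    left
    refine ⟨?_, by simp [hs0, ht0, ← h]⟩
    simp [ht0, hx]
  · have ha : (0:ℝ) ≤ s / (s + t) := by positivity
    have hb : (0:ℝ) ≤ t / (s + t) := by positivity
    have hab : s / (s + t) + t / (s + t) = 1 := by field_simp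
    have hq₁ : ((x, s + t) : E × ℝ) ∈
        convexHull ℝ ((D ×ˢ ({s + t} : Set ℝ)) ∪ ((D + (s + t) • T) ×ˢ ({0} : Set ℝ))) :=
      subset_convexHull ℝ _ (Or.inl ⟨hx, rfl⟩)
    have hq₂ : ((x + (s + t) • τ, 0) : E × ℝ) ∈
        convexHull ℝ ((D ×ˢ ({s + t} : Set ℝ)) ∪ ((D + (s + t) • T) ×ˢ ({0} : Set ℝ))) :=
      subset_convexHull ℝ _ (Or.inr ⟨⟨x, hx, (s + t) • τ, ⟨τ, hτ, rfl⟩, rfl⟩, rfl⟩)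
    have := (convex_convexHull ℝ _) hq₁ hq₂ ha hb hab
    convert this using 1
    have hne : s + t ≠ 0 := ne_of_gt h
    refine Prod.ext ?_ ?_
    · simp only [Prod.smul_mk, Prod.mk_add_mk, smul_eq_mul]
      rw [smul_add, ← add_assoc, ← add_smul, hab, one_smul, smul_smul]
      congr 1
      field_simp
    · simp only [Prod.smul_mk, Prod.mk_add_mk, smul_eq_mul]
      field_simp
      ring

/-- Additivity of push-pull polytopes: `Δ(s,A) + Δ(t,C) = Δ(s+t, A+C)`, where
`Δ(r,X) = conv((X × {r}) ∪ ((X + r•T) × {0}))`. -/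
theorem pushPull_add (n : ℕ) (A C T : Set (Fin n → ℝ))
    (hAne : A.Nonempty) (hCne : C.Nonempty) (hTne : T.Nonempty)
    (hAc : IsCompact A) (hCc : IsCompact C) (hTc : IsCompact T)
    (hAv : Convex ℝ A) (hCv : Convex ℝ C) (hTv : Convex ℝ T)
    (s t : ℝ) (hs : 0 ≤ s) (ht : 0 ≤ t) :
    convexHull ℝ ((A ×ˢ ({s} : Set ℝ)) ∪ ((A + s • T) ×ˢ ({0} : Set ℝ))) +
        convexHull ℝ ((C ×ˢ ({t} : Set ℝ)) ∪ ((C + t • T) ×ˢ ({0} : Set ℝ))) =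
      convexHull ℝ (((A + C) ×ˢ ({s + t} : Set ℝ)) ∪
        (((A + C) + (s + t) • T) ×ˢ ({0} : Set ℝ))) := by
  rw [← convexHull_add]
  have hsmul : (s + t) • T = s • T + t • T := hTv.add_smul hs ht
  have hexp : ((A ×ˢ ({s} : Set ℝ)) ∪ ((A + s • T) ×ˢ ({0} : Set ℝ))) +
      ((C ×ˢ ({t} : Set ℝ)) ∪ ((C + t • T) ×ˢ ({0} : Set ℝ))) =
      ((A + C) ×ˢ ({s + t} : Set ℝ)) ∪ ((A + C + t • T) ×ˢ ({s} : Set ℝ)) ∪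
      ((A + C + s • T) ×ˢ ({t} : Set ℝ)) ∪ ((A + C + (s + t) • T) ×ˢ ({0} : Set ℝ)) := by
    rw [Set.union_add, Set.add_union, Set.add_union, prod_singleton_add, prod_singleton_add,
      prod_singleton_add, prod_singleton_add, hsmul]
    have e1 : A + (C + t • T) = A + C + t • T := by rw [add_assoc]
    have e2 : A + s • T + C = A + C + s • T := by
      rw [add_assoc, add_comm (s • T) C, ← add_assoc]
    have e3 : A + s • T + (C + t • T) = A + C + (s • T + t • T) := by ac_rfl
    have e4 : s + 0 = s := add_zero s
    have e5 : (0:ℝ) + t = t := zero_add t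
    have e6 : (0:ℝ) + 0 = 0 := add_zero 0
    rw [e1, e2, e3, e4, e5, e6]
    ac_rfl
  rw [hexp]
  apply le_antisymm
  · apply convexHull_min _ (convex_convexHull ℝ _)
    intro p hp
    rcases hp with ((h1 | h2) | h3) | h4
    · exact subset_convexHull ℝ _ (Or.inl h1)
    · exact mid_subset (A + C) T s t hs ht h2
    · have := mid_subset (A + C) T t s ht hs h3
      rwa [add_comm t s] at this
    · exact subset_convexHull ℝ _ (Or.inr h4)
  · apply convexHull_mono
    intro p hp
    rcases hp with h1 | h2
    · exact Or.inl (Or.inl (Or.inl h1))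
    · exact Or.inr h2
end

section
/- Let A and T be nonempty compact convex subsets of ℝⁿ and let s ≥ 0. Then the (n+1)-dimensional Lebesgue measure of conv((A×{s}) ∪ ((A+sT)×{0})) ⊆ ℝⁿ⁺¹ equals ∫₀ˢ volₙ(A + r·T) dr, where volₙ denotes n-dimensional Lebesgue measure. -/
open Pointwise MeasureTheory

private lemma isCompact_convexJoin {E : Type*} [NormedAddCommGroup E] [NormedSpace ℝ E]
    {s t : Set E} (hs : IsCompact s) (ht : IsCompact t) :
    IsCompact (convexJoin ℝ s t) := by
  have himg : convexJoin ℝ s t =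
      (fun p : (E × E) × ℝ => (1 - p.2) • p.1.1 + p.2 • p.1.2) '' ((s ×ˢ t) ×ˢ Set.Icc 0 1) := by
    ext x
    simp only [mem_convexJoin, Set.mem_image, Set.mem_prod, Set.mem_Icc]
    constructor
    · rintro ⟨a, ha, b, hb, hx⟩
      rw [segment_eq_image ℝ] at hx
      obtain ⟨θ, hθ, rfl⟩ := hx
      exact ⟨((a, b), θ), ⟨⟨ha, hb⟩, hθ⟩, rfl⟩
    · rintro ⟨⟨⟨a, b⟩, θ⟩, ⟨⟨ha, hb⟩, hθ⟩, rfl⟩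
      refine ⟨a, ha, b, hb, ?_⟩
      rw [segment_eq_image ℝ]
      exact ⟨θ, hθ, rfl⟩
  rw [himg]
  refine ((hs.prod ht).prod isCompact_Icc).image ?_
  fun_prop

private lemma pushPull_mem_iff {n : ℕ} {A T : Set (Fin n → ℝ)}
    (hAne : A.Nonempty) (hTne : T.Nonempty) (hAv : Convex ℝ A) (hTv : Convex ℝ T)
    {s : ℝ} (hs0 : 0 < s) (t : ℝ) (x : Fin n → ℝ) :
    (x, t) ∈ convexHull ℝ
        ((A ×ˢ ({s} : Set ℝ)) ∪ ((A + s • T) ×ˢ ({0} : Set ℝ)))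
      ↔ t ∈ Set.Icc 0 s ∧ x ∈ A + (s - t) • T := by
  have hsne : s ≠ 0 := hs0.ne'
  have hBv : Convex ℝ (A + s • T) := hAv.add (hTv.smul s)
  have hBne : (A + s • T).Nonempty := hAne.add (hTne.smul_set)
  rw [(hAv.prod (convex_singleton s)).convexHull_union (hBv.prod (convex_singleton 0))
      (hAne.prod (Set.singleton_nonempty _)) (hBne.prod (Set.singleton_nonempty _)),
    mem_convexJoin]
  constructor
  · rintro ⟨p, hp, q, hq, u, v, hu, hv, huv, heq⟩
    obtain ⟨ha, hps⟩ := hp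
    obtain ⟨hb, hqz⟩ := hq
    rw [Set.mem_singleton_iff] at hps hqz
    have h2 : u * s = t := by
      have h := congrArg Prod.snd heq
      simp only [Prod.snd_add, Prod.smul_snd, smul_eq_mul, hps, hqz, mul_zero,
        add_zero] at h
      exact h
    have h1 : u • p.1 + v • q.1 = x := by
      have h := congrArg Prod.fst heq
      simpa using h
    rw [Set.mem_add] at hb
    obtain ⟨a', ha', w, hw, hba⟩ := hb
    obtain ⟨τ, hτ, rfl⟩ := hw
    rw [← hba] at h1
    have hu1 : u ≤ 1 := by linarith
    refine ⟨⟨by nlinarith, by nlinarith⟩, ?_⟩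
    rw [Set.mem_add]
    refine ⟨u • p.1 + v • a', hAv ha ha' hu hv huv, (s - t) • τ,
      Set.smul_mem_smul_set hτ, ?_⟩
    have hvs : v * s = s - t := by nlinarith
    rw [← h1, smul_add, smul_smul, hvs, add_assoc]
  · rintro ⟨⟨ht0, hts⟩, hx⟩
    rw [Set.mem_add] at hx
    obtain ⟨c, hc, w, hw, rfl⟩ := hx
    obtain ⟨τ, hτ, rfl⟩ := hw
    refine ⟨(c, s), ⟨hc, rfl⟩, (c + s • τ, 0),
      ⟨Set.add_mem_add hc (Set.smul_mem_smul_set hτ), rfl⟩,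
      t / s, (s - t) / s, div_nonneg ht0 hs0.le,
      div_nonneg (by linarith) hs0.le, by field_simp; ring, ?_⟩
    have h1 : (t / s) • c + ((s - t) / s) • (c + s • τ) = c + (s - t) • τ := by
      rw [smul_add, smul_smul]
      have e1 : (s - t) / s * s = s - t := by field_simp
      have e2 : t / s + (s - t) / s = 1 := by field_simp; ring
      rw [e1, ← add_assoc, ← add_smul, e2, one_smul]
    have h2 : (t / s) * s + ((s - t) / s) * 0 = t := by field_simp; ring
    simp only [Prod.smul_mk, Prod.mk_add_mk, smul_eq_mul, Prod.mk.injEq]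
    exact ⟨h1, h2⟩

private lemma pushPull_slice_out {n : ℕ} {A T : Set (Fin n → ℝ)} {s : ℝ} (hs : 0 ≤ s)
    {t : ℝ} (ht : t ∉ Set.Icc 0 s) :
    (fun x : Fin n → ℝ => (x, t)) ⁻¹' (convexHull ℝ
        ((A ×ˢ ({s} : Set ℝ)) ∪ ((A + s • T) ×ˢ ({0} : Set ℝ)))) = ∅ := by
  have hsub : convexHull ℝ ((A ×ˢ ({s} : Set ℝ)) ∪ ((A + s • T) ×ˢ ({0} : Set ℝ)))
      ⊆ (LinearMap.snd ℝ (Fin n → ℝ) ℝ) ⁻¹' Set.Icc 0 s := by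
    apply convexHull_min
    · rintro ⟨x, r⟩ (⟨-, rfl⟩ | ⟨-, rfl⟩)
      · exact ⟨hs, le_rfl⟩
      · exact ⟨le_rfl, hs⟩
    · exact (convex_Icc 0 s).linear_preimage _
  ext x
  simp only [Set.mem_preimage, Set.mem_empty_iff_false, iff_false]
  intro hx
  exact ht (hsub hx)

/-- The `(n+1)`-dimensional volume of the push-pull polytope
`Δ(s,A) = conv((A × {s}) ∪ ((A + s•T) × {0}))` equals `∫₀ˢ volₙ(A + r•T) dr`. -/
theorem pushPull_volume (n : ℕ) (A T : Set (Fin n → ℝ))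
    (hAne : A.Nonempty) (hTne : T.Nonempty)
    (hAc : IsCompact A) (hTc : IsCompact T)
    (hAv : Convex ℝ A) (hTv : Convex ℝ T)
    (s : ℝ) (hs : 0 ≤ s) :
    (volume (convexHull ℝ
        ((A ×ˢ ({s} : Set ℝ)) ∪ ((A + s • T) ×ˢ ({0} : Set ℝ))))).toReal =
      ∫ r in (0 : ℝ)..s, (volume (A + r • T)).toReal := by
  rcases hs.eq_or_lt with hs0 | hs0
  · -- degenerate case s = 0
    subst hs0
    rw [Set.zero_smul_set hTne, add_zero, Set.union_self,
      (hAv.prod (convex_singleton (0 : ℝ))).convexHull_eq,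
      Measure.volume_eq_prod, Measure.prod_prod, Real.volume_singleton, mul_zero]
    simp
  · -- main case s > 0
    set K := convexHull ℝ ((A ×ˢ ({s} : Set ℝ)) ∪ ((A + s • T) ×ˢ ({0} : Set ℝ))) with hKdef
    have hBc : IsCompact (A + s • T) := hAc.add (hTc.smul s)
    have hKc : IsCompact K := by
      have hBv : Convex ℝ (A + s • T) := hAv.add (hTv.smul s)
      have hBne : (A + s • T).Nonempty := hAne.add (hTne.smul_set)
      rw [hKdef, (hAv.prod (convex_singleton s)).convexHull_union
        (hBv.prod (convex_singleton 0)) (hAne.prod (Set.singleton_nonempty _))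
        (hBne.prod (Set.singleton_nonempty _))]
      exact isCompact_convexJoin (hAc.prod isCompact_singleton)
        (hBc.prod isCompact_singleton)
    have hKm : MeasurableSet K := hKc.isClosed.measurableSet
    have hslice : ∀ t : ℝ, volume ((fun x : Fin n → ℝ => (x, t)) ⁻¹' K)
        = Set.indicator (Set.Icc 0 s) (fun t => volume (A + (s - t) • T)) t := by
      intro t
      by_cases ht : t ∈ Set.Icc 0 s
      · rw [Set.indicator_of_mem ht]
        congr 1
        ext x
        simp only [Set.mem_preimage, hKdef]
        rw [pushPull_mem_iff hAne hTne hAv hTv hs0 t x]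
        exact and_iff_right ht
      · rw [Set.indicator_of_notMem ht, hKdef, pushPull_slice_out hs ht, measure_empty]
    have hvol : volume K = ∫⁻ t in Set.Ioc (0 : ℝ) s, volume (A + (s - t) • T) := by
      rw [Measure.volume_eq_prod, Measure.prod_apply_symm hKm]
      simp_rw [hslice]
      rw [lintegral_indicator measurableSet_Icc]
      exact (setLIntegral_congr (Ioc_ae_eq_Icc (μ := volume) (a := (0:ℝ)) (b := s))).symm
    have hfm : Measurable fun t : ℝ => volume ((fun x : Fin n → ℝ => (x, t)) ⁻¹' K) :=
      measurable_measure_prodMk_right hKm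
    have hae : (fun t : ℝ => volume (A + (s - t) • T))
        =ᵐ[volume.restrict (Set.Ioc (0 : ℝ) s)]
        (fun t : ℝ => volume ((fun x : Fin n → ℝ => (x, t)) ⁻¹' K)) := by
      filter_upwards [ae_restrict_mem measurableSet_Ioc] with t ht
      rw [hslice t, Set.indicator_of_mem (Set.Ioc_subset_Icc_self ht)]
    have hmeas : AEMeasurable (fun t : ℝ => volume (A + (s - t) • T))
        (volume.restrict (Set.Ioc (0 : ℝ) s)) :=
      hfm.aemeasurable.congr hae.symm
    have hfin : ∀ᵐ t ∂(volume.restrict (Set.Ioc (0 : ℝ) s)),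
        volume (A + (s - t) • T) < ⊤ := by
      filter_upwards with t
      exact (hAc.add (hTc.smul _)).measure_lt_top
    calc (volume K).toReal
        = (∫⁻ t in Set.Ioc (0 : ℝ) s, volume (A + (s - t) • T)).toReal := by rw [hvol]
      _ = ∫ t in Set.Ioc (0 : ℝ) s, (volume (A + (s - t) • T)).toReal :=
          (integral_toReal hmeas hfin).symm
      _ = ∫ t in (0 : ℝ)..s, (volume (A + (s - t) • T)).toReal :=
          (intervalIntegral.integral_of_le hs).symm
      _ = ∫ r in (0 : ℝ)..s, (volume (A + r • T)).toReal := by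
          rw [intervalIntegral.integral_comp_sub_left
            (fun r => (volume (A + r • T)).toReal) s]
          simp
end

section
/- Let A and B be nonempty compact convex subsets of ℝⁿ. Then the (n+1)-dimensional Lebesgue measure of conv((A×{1}) ∪ (B×{0})) ⊆ ℝⁿ⁺¹ equals ∫₀¹ volₙ(r·A + (1−r)·B) dr, where volₙ denotes n-dimensional Lebesgue measure. -/
open Pointwise MeasureTheory

/-- The `(n+1)`-dimensional volume of the Cayley sum `conv((A × {1}) ∪ (B × {0}))`
of nonempty compact convex sets `A, B ⊆ ℝⁿ` equals `∫₀¹ volₙ(r•A + (1-r)•B) dr`. -/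
theorem cayley_sum_volume (n : ℕ) (A B : Set (Fin n → ℝ))
    (hAne : A.Nonempty) (hBne : B.Nonempty)
    (hAc : IsCompact A) (hBc : IsCompact B)
    (hAv : Convex ℝ A) (hBv : Convex ℝ B) :
    (volume (convexHull ℝ
        ((A ×ˢ ({1} : Set ℝ)) ∪ (B ×ˢ ({0} : Set ℝ))))).toReal =
      ∫ r in (0 : ℝ)..1, (volume (r • A + (1 - r) • B)).toReal := by
  classical
  set T : Set ((Fin n → ℝ) × ℝ) :=
    {p : (Fin n → ℝ) × ℝ | p.2 ∈ Set.Icc (0:ℝ) 1 ∧ p.1 ∈ p.2 • A + (1 - p.2) • B} with hT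
  -- Step 1: the convex hull is exactly `T`.
  have hSeq : convexHull ℝ ((A ×ˢ ({1} : Set ℝ)) ∪ (B ×ˢ ({0} : Set ℝ))) = T := by
    rw [(hAv.prod (convex_singleton (1:ℝ))).convexHull_union
        (hBv.prod (convex_singleton (0:ℝ)))
        (hAne.prod (Set.singleton_nonempty _)) (hBne.prod (Set.singleton_nonempty _))]
    ext ⟨x, r⟩
    simp only [mem_convexJoin, hT, Set.mem_setOf_eq]
    constructor
    · rintro ⟨⟨a, r1⟩, ⟨ha, h1⟩, ⟨b, r0⟩, ⟨hb, h0⟩, hseg⟩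
      simp only [Set.mem_singleton_iff] at h1 h0
      subst h1; subst h0
      obtain ⟨θ, η, hθ, hη, hsum, heq⟩ := hseg
      have h2 : θ • (1:ℝ) + η • (0:ℝ) = r := congrArg Prod.snd heq
      have h1' : θ • a + η • b = x := congrArg Prod.fst heq
      simp only [smul_eq_mul, mul_one, mul_zero, add_zero] at h2
      subst h2
      refine ⟨⟨hθ, by linarith⟩, ?_⟩
      have hη' : η = 1 - θ := by linarith
      exact ⟨θ • a, Set.smul_mem_smul_set ha, (1 - θ) • b,
        Set.smul_mem_smul_set hb, by rw [← hη']; exact h1'⟩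
    · rintro ⟨⟨hr0, hr1⟩, hx⟩
      obtain ⟨y, ⟨a, ha, rfl⟩, z, ⟨b, hb, rfl⟩, hxy⟩ := hx
      refine ⟨(a, 1), ⟨ha, rfl⟩, (b, 0), ⟨hb, rfl⟩, r, 1 - r, hr0, by linarith, by ring, ?_⟩
      apply Prod.ext
      · simpa using hxy
      · simp
  rw [hSeq]
  -- Step 2: `T` is compact, hence measurable with finite volume.
  have hTcomp : IsCompact T := by
    have himg : T = (fun q : ((Fin n → ℝ) × (Fin n → ℝ)) × ℝ =>
        (q.2 • q.1.1 + (1 - q.2) • q.1.2, q.2)) '' ((A ×ˢ B) ×ˢ Set.Icc (0:ℝ) 1) := by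
      ext ⟨x, r⟩
      constructor
      · rintro ⟨hr, y, ⟨a, ha, rfl⟩, z, ⟨b, hb, rfl⟩, hxy⟩
        exact ⟨((a, b), r), ⟨⟨ha, hb⟩, hr⟩, by simp [hxy]⟩
      · rintro ⟨⟨⟨a, b⟩, s⟩, ⟨⟨ha, hb⟩, hs⟩, heq⟩
        have h2 : s = r := congrArg Prod.snd heq
        subst h2
        have h1 : s • a + (1 - s) • b = x := congrArg Prod.fst heq
        exact ⟨hs, s • a, Set.smul_mem_smul_set ha, (1 - s) • b,
          Set.smul_mem_smul_set hb, h1⟩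
    rw [himg]
    exact (((hAc.prod hBc).prod isCompact_Icc).image (by fun_prop))
  have hmeasT : MeasurableSet T := hTcomp.isClosed.measurableSet
  have hTfin : volume T ≠ ⊤ := hTcomp.measure_lt_top.ne
  -- Step 3: slices of `T`.
  have hslice : ∀ r : ℝ, (fun x => (x, r)) ⁻¹' T =
      if r ∈ Set.Icc (0:ℝ) 1 then r • A + (1 - r) • B else ∅ := by
    intro r
    ext x
    by_cases h : r ∈ Set.Icc (0:ℝ) 1
    · simp only [hT, Set.mem_setOf_eq, Set.mem_preimage, if_pos h]
      exact ⟨fun hp => hp.2, fun hx => ⟨h, hx⟩⟩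
    · simp only [hT, Set.mem_setOf_eq, Set.mem_preimage, if_neg h]
      exact ⟨fun hp => h hp.1, fun hx => hx.elim⟩
  -- Step 4: Fubini.
  have hg : Measurable fun r : ℝ => volume ((fun x => (x, r)) ⁻¹' T) :=
    measurable_measure_prodMk_right hmeasT
  have hvol : volume T = ∫⁻ r in Set.Icc (0:ℝ) 1, volume (r • A + (1 - r) • B) := by
    rw [Measure.volume_eq_prod, Measure.prod_apply_symm hmeasT,
      ← lintegral_indicator measurableSet_Icc]
    congr 1
    ext r
    rw [hslice r, Set.indicator_apply]
    split_ifs with h <;> simp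
  have hIoc : volume T = ∫⁻ r in Set.Ioc (0:ℝ) 1, volume (r • A + (1 - r) • B) := by
    rw [hvol, ← Measure.restrict_congr_set Ioc_ae_eq_Icc]
  -- Measurability / finiteness on `Ioc 0 1`.
  have hgae : AEMeasurable (fun r : ℝ => volume (r • A + (1 - r) • B))
      (volume.restrict (Set.Ioc (0:ℝ) 1)) := by
    refine hg.aemeasurable.congr ?_
    filter_upwards [self_mem_ae_restrict measurableSet_Ioc] with r hr
    rw [hslice r, if_pos (Set.Ioc_subset_Icc_self hr)]
  have hfinae : ∀ᵐ r ∂(volume.restrict (Set.Ioc (0:ℝ) 1)),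
      volume (r • A + (1 - r) • B) < ⊤ := by
    refine ae_lt_top' hgae ?_
    rw [← hIoc]; exact hTfin
  rw [intervalIntegral.integral_of_le zero_le_one, hIoc,
    ← integral_toReal hgae hfinae]
end

section
/- Let P = conv{(0,0), (2,0), (1,1), (0,1)} ⊂ ℝ² and let Q = P + I be its Minkowski sum with the segment I = conv{(0,0), (0,1)}, so Q = conv{(0,0), (2,0), (2,1), (1,2), (0,2)}. Then the convex hull of (P×{1}) ∪ (Q×{0}) in ℝ³ equals the Minkowski sum F + J, where F = {(x, y, s) ∈ ℝ³ : x ≥ 0, y ≥ 0, 0 ≤ s ≤ 1, x ≤ 1, x + y + s ≤ 2} is the FFLV polytope in type A₂ for the weight ρ and J is the segment conv{(0,0,0), (1,0,0)}. -/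
open Pointwise

lemma lemP (u v : ℝ) (h1 : 0 ≤ u) (h2 : 0 ≤ v) (h3 : v ≤ 1) (h4 : u + v ≤ 2) :
    ((u, v) : ℝ × ℝ) ∈ convexHull ℝ ({((0 : ℝ), (0 : ℝ)), (2, 0), (1, 1), (0, 1)} : Set (ℝ × ℝ)) := by
  set K := convexHull ℝ ({((0 : ℝ), (0 : ℝ)), (2, 0), (1, 1), (0, 1)} : Set (ℝ × ℝ)) with hKdef
  have hK : Convex ℝ K := convex_convexHull ℝ _
  have m1 : ((0,0) : ℝ × ℝ) ∈ K := subset_convexHull ℝ _ (by simp)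
  have m2 : ((2,0) : ℝ × ℝ) ∈ K := subset_convexHull ℝ _ (by simp)
  have m3 : ((1,1) : ℝ × ℝ) ∈ K := subset_convexHull ℝ _ (by simp)
  have m4 : ((0,1) : ℝ × ℝ) ∈ K := subset_convexHull ℝ _ (by simp)
  have e1 : ((0, v) : ℝ × ℝ) ∈ K := by
    have h := hK m1 m4 (by linarith : (0:ℝ) ≤ 1 - v) h2 (by ring)
    have : (1 - v) • ((0,0) : ℝ × ℝ) + v • ((0,1) : ℝ × ℝ) = (0, v) := by
      simp only [Prod.smul_mk, Prod.mk_add_mk, smul_eq_mul, Prod.mk.injEq]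
      constructor <;> ring
    rwa [this] at h
  have e2 : ((2 - v, v) : ℝ × ℝ) ∈ K := by
    have h := hK m2 m3 (by linarith : (0:ℝ) ≤ 1 - v) h2 (by ring)
    have : (1 - v) • ((2,0) : ℝ × ℝ) + v • ((1,1) : ℝ × ℝ) = (2 - v, v) := by
      simp only [Prod.smul_mk, Prod.mk_add_mk, smul_eq_mul, Prod.mk.injEq]
      constructor <;> ring
    rwa [this] at h
  have hv2 : (0:ℝ) < 2 - v := by linarith
  have hl0 : 0 ≤ u / (2 - v) := div_nonneg h1 (le_of_lt hv2)
  have hl1 : u / (2 - v) ≤ 1 := (div_le_one hv2).2 (by linarith)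
  have h := hK e1 e2 (by linarith : (0:ℝ) ≤ 1 - u / (2 - v)) hl0 (by ring)
  have hc : u / (2 - v) * (2 - v) = u := div_mul_cancel₀ u (ne_of_gt hv2)
  have : (1 - u / (2 - v)) • ((0, v) : ℝ × ℝ) + (u / (2 - v)) • ((2 - v, v) : ℝ × ℝ) = (u, v) := by
    simp only [Prod.smul_mk, Prod.mk_add_mk, smul_eq_mul, Prod.mk.injEq]
    constructor <;> nlinarith [hc]
  rwa [this] at h

lemma memI (t : ℝ) (h0 : 0 ≤ t) (h1 : t ≤ 1) :
    ((0, t) : ℝ × ℝ) ∈ convexHull ℝ ({((0 : ℝ), (0 : ℝ)), (0, 1)} : Set (ℝ × ℝ)) := by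
  have hK : Convex ℝ (convexHull ℝ ({((0 : ℝ), (0 : ℝ)), (0, 1)} : Set (ℝ × ℝ))) :=
    convex_convexHull ℝ _
  have m1 : ((0,0) : ℝ × ℝ) ∈ convexHull ℝ ({((0 : ℝ), (0 : ℝ)), (0, 1)} : Set (ℝ × ℝ)) :=
    subset_convexHull ℝ _ (by simp)
  have m2 : ((0,1) : ℝ × ℝ) ∈ convexHull ℝ ({((0 : ℝ), (0 : ℝ)), (0, 1)} : Set (ℝ × ℝ)) :=
    subset_convexHull ℝ _ (by simp)
  have h := hK m1 m2 (by linarith : (0:ℝ) ≤ 1 - t) h0 (by ring)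
  have : (1 - t) • ((0,0) : ℝ × ℝ) + t • ((0,1) : ℝ × ℝ) = (0, t) := by
    simp only [Prod.smul_mk, Prod.mk_add_mk, smul_eq_mul, Prod.mk.injEq]
    constructor <;> ring
  rwa [this] at h

lemma segMem3 (t : ℝ) (h0 : 0 ≤ t) (h1 : t ≤ 1) :
    (((t, 0), 0) : (ℝ × ℝ) × ℝ) ∈
      convexHull ℝ ({(((0 : ℝ), (0 : ℝ)), (0 : ℝ)), ((1, 0), 0)} : Set ((ℝ × ℝ) × ℝ)) := by
  have hK : Convex ℝ (convexHull ℝ ({(((0 : ℝ), (0 : ℝ)), (0 : ℝ)), ((1, 0), 0)} : Set ((ℝ × ℝ) × ℝ))) :=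
    convex_convexHull ℝ _
  have m1 : (((0,0),0) : (ℝ × ℝ) × ℝ) ∈ convexHull ℝ ({(((0 : ℝ), (0 : ℝ)), (0 : ℝ)), ((1, 0), 0)} : Set ((ℝ × ℝ) × ℝ)) :=
    subset_convexHull ℝ _ (by simp)
  have m2 : (((1,0),0) : (ℝ × ℝ) × ℝ) ∈ convexHull ℝ ({(((0 : ℝ), (0 : ℝ)), (0 : ℝ)), ((1, 0), 0)} : Set ((ℝ × ℝ) × ℝ)) :=
    subset_convexHull ℝ _ (by simp)
  have h := hK m1 m2 (by linarith : (0:ℝ) ≤ 1 - t) h0 (by ring)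
  have : (1 - t) • ((((0:ℝ),(0:ℝ)),(0:ℝ)) : (ℝ × ℝ) × ℝ) + t • (((1,0),0) : (ℝ × ℝ) × ℝ) = ((t, 0), 0) := by
    simp only [Prod.smul_mk, Prod.mk_add_mk, smul_eq_mul, Prod.mk.injEq]
    refine ⟨⟨by ring, by ring⟩, by ring⟩
  rwa [this] at h

-- Q = P + I membership from H-description
lemma lemQ (u v : ℝ) (h1 : 0 ≤ u) (h2 : 0 ≤ v) (h3 : u ≤ 2) (h4 : v ≤ 2) (h5 : u + v ≤ 3) :
    ((u, v) : ℝ × ℝ) ∈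
      convexHull ℝ ({((0 : ℝ), (0 : ℝ)), (2, 0), (1, 1), (0, 1)} : Set (ℝ × ℝ)) +
        convexHull ℝ ({((0 : ℝ), (0 : ℝ)), (0, 1)} : Set (ℝ × ℝ)) := by
  set t := max 0 (max (v - 1) (u + v - 2)) with ht
  have ht0 : 0 ≤ t := le_max_left _ _
  have ht1 : t ≤ 1 := max_le (by norm_num) (max_le (by linarith) (by linarith))
  have htv : t ≤ v := max_le h2 (max_le (by linarith) (by linarith))
  have htv1 : v - 1 ≤ t := le_trans (le_max_left _ _) (le_max_right _ _)
  have htuv : u + v - 2 ≤ t := le_trans (le_max_right _ _) (le_max_right _ _)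
  rw [Set.mem_add]
  refine ⟨(u, v - t), lemP u (v - t) h1 (by linarith) (by linarith) (by linarith),
    (0, t), memI t ht0 ht1, ?_⟩
  simp only [Prod.mk_add_mk, Prod.mk.injEq]
  constructor <;> ring

lemma convexF : Convex ℝ {p : (ℝ × ℝ) × ℝ | 0 ≤ p.1.1 ∧ 0 ≤ p.1.2 ∧ 0 ≤ p.2 ∧ p.2 ≤ 1 ∧ p.1.1 ≤ 1 ∧
    p.1.1 + p.1.2 + p.2 ≤ 2} := by
  intro p hp q hq a b ha hb hab
  simp only [Set.mem_setOf_eq, Prod.fst_add, Prod.snd_add, Prod.smul_fst, Prod.smul_snd,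
    smul_eq_mul] at *
  obtain ⟨p1, p2, p3, p4, p5, p6⟩ := hp
  obtain ⟨q1, q2, q3, q4, q5, q6⟩ := hq
  refine ⟨by nlinarith, by nlinarith, by nlinarith, by nlinarith, by nlinarith, by nlinarith⟩

-- a point satisfying the H-description of F + J lies in F + J
lemma memFJ (x y s : ℝ) (h1 : 0 ≤ x) (h2 : 0 ≤ y) (h3 : 0 ≤ s) (h4 : s ≤ 1)
    (h5 : x ≤ 2) (h6 : y + s ≤ 2) (h7 : x + y + s ≤ 3) :
    (((x, y), s) : (ℝ × ℝ) × ℝ) ∈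
      {p : (ℝ × ℝ) × ℝ | 0 ≤ p.1.1 ∧ 0 ≤ p.1.2 ∧ 0 ≤ p.2 ∧ p.2 ≤ 1 ∧ p.1.1 ≤ 1 ∧
          p.1.1 + p.1.2 + p.2 ≤ 2} +
        convexHull ℝ ({(((0 : ℝ), (0 : ℝ)), (0 : ℝ)), ((1, 0), 0)} : Set ((ℝ × ℝ) × ℝ)) := by
  set t := max 0 (max (x - 1) (x + y + s - 2)) with ht
  have ht0 : 0 ≤ t := le_max_left _ _
  have ht1 : t ≤ 1 := max_le (by norm_num) (max_le (by linarith) (by linarith))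
  have htx : t ≤ x := max_le h1 (max_le (by linarith) (by linarith))
  have hta : x - 1 ≤ t := le_trans (le_max_left _ _) (le_max_right _ _)
  have htb : x + y + s - 2 ≤ t := le_trans (le_max_right _ _) (le_max_right _ _)
  rw [Set.mem_add]
  refine ⟨((x - t, y), s), ?_, ((t, 0), 0), segMem3 t ht0 ht1, ?_⟩
  · exact ⟨by simpa using (by linarith : (0:ℝ) ≤ x - t), by simpa using h2, by simpa using h3,
      by simpa using h4, by simpa using (by linarith : x - t ≤ 1),
      by simpa using (by linarith : x - t + y + s ≤ 2)⟩
  · simp only [Prod.mk_add_mk, Prod.mk.injEq]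
    refine ⟨⟨by ring, by ring⟩, by ring⟩

lemma memLHS (x y s : ℝ) (h1 : 0 ≤ x) (h2 : 0 ≤ y) (h3 : 0 ≤ s) (h4 : s ≤ 1)
    (h5 : x ≤ 2) (h6 : y + s ≤ 2) (h7 : x + y + s ≤ 3) :
    (((x, y), s) : (ℝ × ℝ) × ℝ) ∈ convexHull ℝ
        (((convexHull ℝ ({((0 : ℝ), (0 : ℝ)), (2, 0), (1, 1), (0, 1)} : Set (ℝ × ℝ))) ×ˢ
            ({1} : Set ℝ)) ∪
          ((convexHull ℝ ({((0 : ℝ), (0 : ℝ)), (2, 0), (1, 1), (0, 1)} : Set (ℝ × ℝ)) +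
              convexHull ℝ ({((0 : ℝ), (0 : ℝ)), (0, 1)} : Set (ℝ × ℝ))) ×ˢ
            ({0} : Set ℝ))) := by
  set U := (((convexHull ℝ ({((0 : ℝ), (0 : ℝ)), (2, 0), (1, 1), (0, 1)} : Set (ℝ × ℝ))) ×ˢ
            ({1} : Set ℝ)) ∪
          ((convexHull ℝ ({((0 : ℝ), (0 : ℝ)), (2, 0), (1, 1), (0, 1)} : Set (ℝ × ℝ)) +
              convexHull ℝ ({((0 : ℝ), (0 : ℝ)), (0, 1)} : Set (ℝ × ℝ))) ×ˢ
            ({0} : Set ℝ))) with hU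
  have hP1 : ∀ a b : ℝ,
      ((a, b) : ℝ × ℝ) ∈ convexHull ℝ ({((0 : ℝ), (0 : ℝ)), (2, 0), (1, 1), (0, 1)} : Set (ℝ × ℝ)) →
      (((a, b), 1) : (ℝ × ℝ) × ℝ) ∈ convexHull ℝ U := fun a b hab =>
    subset_convexHull ℝ U (Set.mem_union_left _ ⟨hab, rfl⟩)
  have hQ0 : ∀ a b : ℝ,
      ((a, b) : ℝ × ℝ) ∈ (convexHull ℝ ({((0 : ℝ), (0 : ℝ)), (2, 0), (1, 1), (0, 1)} : Set (ℝ × ℝ)) +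
          convexHull ℝ ({((0 : ℝ), (0 : ℝ)), (0, 1)} : Set (ℝ × ℝ))) →
      (((a, b), 0) : (ℝ × ℝ) × ℝ) ∈ convexHull ℝ U := fun a b hab =>
    subset_convexHull ℝ U (Set.mem_union_right _ ⟨hab, rfl⟩)
  rcases eq_or_lt_of_le h3 with hs0 | hs0
  · -- s = 0
    subst hs0  -- wrong direction? hs0 : 0 = s
    exact hQ0 x y (lemQ x y h1 h2 h5 (by linarith) (by linarith))
  rcases eq_or_lt_of_le h4 with hs1 | hs1
  · -- s = 1
    subst hs1
    exact hP1 x y (lemP x y h1 h2 (by linarith) (by linarith))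
  -- 0 < s < 1
  have hs1' : (0:ℝ) < 1 - s := by linarith
  set u := max 0 (max (x - 2 + 2*s) (x + y - 3 + 2*s)) with hu
  have hu0 : 0 ≤ u := le_max_left _ _
  have hua : x - 2 + 2*s ≤ u := le_trans (le_max_left _ _) (le_max_right _ _)
  have hub : x + y - 3 + 2*s ≤ u := le_trans (le_max_right _ _) (le_max_right _ _)
  have hux : u ≤ x := max_le h1 (max_le (by linarith) (by linarith))
  have hu2s : u ≤ 2*s := max_le (by linarith) (max_le (by linarith) (by linarith))
  set v := max 0 (max (y - 2 + 2*s) (x + y - u - 3 + 3*s)) with hv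
  have hv0 : 0 ≤ v := le_max_left _ _
  have hva : y - 2 + 2*s ≤ v := le_trans (le_max_left _ _) (le_max_right _ _)
  have hvb : x + y - u - 3 + 3*s ≤ v := le_trans (le_max_right _ _) (le_max_right _ _)
  have hvs : v ≤ s := max_le h3 (max_le (by linarith) (by linarith))
  have hvy : v ≤ y := max_le h2 (max_le (by linarith) (by linarith))
  have hu2y : u ≤ 2 - y := max_le (by linarith) (max_le (by linarith) (by linarith))
  have huv2s : u + v ≤ 2*s := by
    have : v ≤ 2*s - u := max_le (by linarith) (max_le (by linarith) (by linarith))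
    linarith
  have hmemP : ((u / s, v / s) : ℝ × ℝ) ∈
      convexHull ℝ ({((0 : ℝ), (0 : ℝ)), (2, 0), (1, 1), (0, 1)} : Set (ℝ × ℝ)) := by
    refine lemP _ _ (div_nonneg hu0 h3) (div_nonneg hv0 h3) ((div_le_one hs0).2 hvs) ?_
    rw [← add_div, div_le_iff₀ hs0]
    linarith
  have hmemQ : (((x - u) / (1 - s), (y - v) / (1 - s)) : ℝ × ℝ) ∈
      (convexHull ℝ ({((0 : ℝ), (0 : ℝ)), (2, 0), (1, 1), (0, 1)} : Set (ℝ × ℝ)) +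
        convexHull ℝ ({((0 : ℝ), (0 : ℝ)), (0, 1)} : Set (ℝ × ℝ))) := by
    refine lemQ _ _ (div_nonneg (by linarith) hs1'.le) (div_nonneg (by linarith) hs1'.le)
      ?_ ?_ ?_
    · rw [div_le_iff₀ hs1']; linarith
    · rw [div_le_iff₀ hs1']; linarith
    · rw [← add_div, div_le_iff₀ hs1']; linarith
  have hK : Convex ℝ (convexHull ℝ U) := convex_convexHull ℝ _
  have h := hK (hP1 _ _ hmemP) (hQ0 _ _ hmemQ) h3 hs1'.le (by ring)
  have heq : s • (((u / s, v / s), 1) : (ℝ × ℝ) × ℝ) +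
      (1 - s) • ((((x - u) / (1 - s), (y - v) / (1 - s)), 0) : (ℝ × ℝ) × ℝ) = ((x, y), s) := by
    have e1 : s * (u / s) + (1 - s) * ((x - u) / (1 - s)) = x := by
      field_simp
      ring
    have e2 : s * (v / s) + (1 - s) * ((y - v) / (1 - s)) = y := by
      field_simp
      ring
    simp only [Prod.smul_mk, Prod.mk_add_mk, smul_eq_mul, Prod.mk.injEq]
    exact ⟨⟨e1, e2⟩, by ring⟩
  rwa [heq] at h

-- P hull subset of its H-description
lemma hullP_sub : convexHull ℝ ({((0 : ℝ), (0 : ℝ)), (2, 0), (1, 1), (0, 1)} : Set (ℝ × ℝ)) ⊆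
    {q : ℝ × ℝ | 0 ≤ q.1 ∧ 0 ≤ q.2 ∧ q.2 ≤ 1 ∧ q.1 + q.2 ≤ 2} := by
  apply convexHull_min
  · rintro q hq
    simp only [Set.mem_insert_iff, Set.mem_singleton_iff] at hq
    rcases hq with rfl | rfl | rfl | rfl <;> norm_num
  · intro p hp q hq a b ha hb hab
    simp only [Set.mem_setOf_eq, Prod.fst_add, Prod.snd_add, Prod.smul_fst, Prod.smul_snd,
      smul_eq_mul] at *
    obtain ⟨p1, p2, p3, p4⟩ := hp
    obtain ⟨q1, q2, q3, q4⟩ := hq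
    refine ⟨by nlinarith, by nlinarith, by nlinarith, by nlinarith⟩

lemma hullI_sub : convexHull ℝ ({((0 : ℝ), (0 : ℝ)), (0, 1)} : Set (ℝ × ℝ)) ⊆
    {q : ℝ × ℝ | q.1 = 0 ∧ 0 ≤ q.2 ∧ q.2 ≤ 1} := by
  apply convexHull_min
  · rintro q hq
    simp only [Set.mem_insert_iff, Set.mem_singleton_iff] at hq
    rcases hq with rfl | rfl <;> norm_num
  · intro p hp q hq a b ha hb hab
    simp only [Set.mem_setOf_eq, Prod.fst_add, Prod.snd_add, Prod.smul_fst, Prod.smul_snd,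
      smul_eq_mul] at *
    obtain ⟨p1, p2, p3⟩ := hp
    obtain ⟨q1, q2, q3⟩ := hq
    refine ⟨by rw [p1, q1]; ring, by nlinarith, by nlinarith⟩

/-- The push-pull polytope `Δ(P, P + I)` over the trapezoid
`P = conv{(0,0), (2,0), (1,1), (0,1)}`, with `I` the vertical unit segment, equals the
Minkowski sum of the FFLV polytope of type `A₂` for `ρ` and the segment
`J = conv{(0,0,0), (1,0,0)}`. -/
theorem pushPull_trapezoid_eq_FFLV_add_segment :
    convexHull ℝ
        (((convexHull ℝ ({((0 : ℝ), (0 : ℝ)), (2, 0), (1, 1), (0, 1)} : Set (ℝ × ℝ))) ×ˢ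
            ({1} : Set ℝ)) ∪
          ((convexHull ℝ ({((0 : ℝ), (0 : ℝ)), (2, 0), (1, 1), (0, 1)} : Set (ℝ × ℝ)) +
              convexHull ℝ ({((0 : ℝ), (0 : ℝ)), (0, 1)} : Set (ℝ × ℝ))) ×ˢ
            ({0} : Set ℝ))) =
      {p : (ℝ × ℝ) × ℝ | 0 ≤ p.1.1 ∧ 0 ≤ p.1.2 ∧ 0 ≤ p.2 ∧ p.2 ≤ 1 ∧ p.1.1 ≤ 1 ∧
          p.1.1 + p.1.2 + p.2 ≤ 2} +
        convexHull ℝ ({(((0 : ℝ), (0 : ℝ)), (0 : ℝ)), ((1, 0), 0)} : Set ((ℝ × ℝ) × ℝ)) := by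
  apply Set.Subset.antisymm
  · -- LHS ⊆ RHS
    apply convexHull_min _ (convexF.add (convex_convexHull ℝ _))
    rintro ⟨⟨x, y⟩, s⟩ (⟨hp, hs⟩ | ⟨hq, hs⟩)
    · simp only [Set.mem_singleton_iff] at hs
      subst hs
      obtain ⟨b1, b2, b3, b4⟩ := hullP_sub hp
      simp only at b1 b2 b3 b4
      exact memFJ x y 1 b1 b2 (by norm_num) (by norm_num) (by linarith) (by linarith)
        (by linarith)
    · simp only [Set.mem_singleton_iff] at hs
      subst hs
      rw [Set.mem_add] at hq
      obtain ⟨⟨pax, pay⟩, hpa, ⟨pix, piy⟩, hpi, hsum⟩ := hq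
      obtain ⟨a1, a2, a3, a4⟩ := hullP_sub hpa
      obtain ⟨i1, i2, i3⟩ := hullI_sub hpi
      simp only at a1 a2 a3 a4 i1 i2 i3
      simp only [Prod.mk_add_mk, Prod.mk.injEq] at hsum
      obtain ⟨hx, hy⟩ := hsum
      subst i1
      exact memFJ x y 0 (by rw [← hx]; linarith) (by rw [← hy]; linarith) le_rfl (by norm_num)
        (by rw [← hx]; linarith) (by rw [← hy]; linarith) (by rw [← hx, ← hy]; linarith)
  · -- RHS ⊆ LHS
    rintro p hp
    rw [Set.mem_add] at hp
    obtain ⟨⟨⟨fx, fy⟩, fs⟩, hf, j, hj, hsum⟩ := hp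
    obtain ⟨f1, f2, f3, f4, f5, f6⟩ := hf
    simp only at f1 f2 f3 f4 f5 f6
    rw [convexHull_pair, segment_eq_image] at hj
    obtain ⟨t, ⟨ht0, ht1⟩, rfl⟩ := hj
    have hjval : (1 - t) • ((((0:ℝ),(0:ℝ)),(0:ℝ)) : (ℝ × ℝ) × ℝ) + t • (((1,0),0) : (ℝ × ℝ) × ℝ)
        = ((t, 0), 0) := by
      simp only [Prod.smul_mk, Prod.mk_add_mk, smul_eq_mul, Prod.mk.injEq]
      refine ⟨⟨by ring, by ring⟩, by ring⟩
    simp only [] at hsum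
    rw [hjval] at hsum
    have : p = ((fx + t, fy), fs) := by
      rw [← hsum]
      simp only [Prod.mk_add_mk, Prod.mk.injEq]
      refine ⟨⟨trivial, by ring⟩, by ring⟩
    rw [this]
    exact memLHS (fx + t) fy fs (by linarith) f2 f3 f4 (by linarith) (by linarith) (by linarith)
end

section
/- Fix a positive definite inner product ⟨·,·⟩ on ℝ^ℓ and nonzero vectors β₁, …, β_ℓ ∈ ℝ^ℓ. Set (α,β) := 2⟨α,β⟩/⟨β,β⟩ and s_β(α) := α − (α,β)β. For λ ∈ ℝ^ℓ define xⱼ := (λ, s_{β₁}s_{β₂}⋯s_{β_{j−1}}(βⱼ)) for j = 1, …, ℓ (with x₁ = (λ, β₁)). Then for every j = 1, …, ℓ one has xⱼ + Σ_{i=1}^{j−1} (βᵢ, βⱼ) xᵢ = (λ, βⱼ). In other words, the point p_I(λ) = (x₁, …, x_ℓ) is the solution of the triangular linear system expressing that each inequality xⱼ ≤ −f_{j−1}(x₁,…,x_{j−1}) + (λ,βⱼ) defining the cube P_I(λ) holds with equality, where f_{j−1}(x₁,…,x_{j−1}) = Σ_{i=1}^{j−1} (βᵢ,βⱼ)xᵢ.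 -/
open RealInnerProductSpace

/-- The Weyl-type pairing `(α, β) = 2⟨α,β⟩/⟨β,β⟩`. -/
noncomputable def wPair {V : Type*} [NormedAddCommGroup V] [InnerProductSpace ℝ V]
    (α β : V) : ℝ :=
  2 * ⟪α, β⟫ / ⟪β, β⟫

/-- `reflSeq β k v = s_{β 0} (s_{β 1} (⋯ (s_{β (k-1)} v)))`, where
`s_β(α) = α − (α,β)β` is the reflection in the hyperplane orthogonal to `β`. -/
noncomputable def reflSeq {V : Type*} [NormedAddCommGroup V] [InnerProductSpace ℝ V]
    (β : ℕ → V) : ℕ → V → V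
  | 0, v => v
  | k + 1, v => reflSeq β k (v - wPair v (β k) • β k)

section Aux

variable {V : Type*} [NormedAddCommGroup V] [InnerProductSpace ℝ V]

lemma wPair_sub_smul (u w b : V) (c : ℝ) :
    wPair (u - c • w) b = wPair u b - c * wPair w b := by
  unfold wPair
  rw [inner_sub_left, real_inner_smul_left]
  ring

lemma reflSeq_sub_smul (β : ℕ → V) (k : ℕ) (u w : V) (c : ℝ) :
    reflSeq β k (u - c • w) = reflSeq β k u - c • reflSeq β k w := by
  induction k generalizing u w with
  | zero => rfl
  | succ k ih =>
    simp only [reflSeq, wPair_sub_smul]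
    rw [show u - c • w - (wPair u (β k) - c * wPair w (β k)) • β k
        = (u - wPair u (β k) • β k) - c • (w - wPair w (β k) • β k) by
      simp only [smul_sub, sub_smul, mul_smul]; abel]
    exact ih _ _

lemma reflSeq_norm (β : ℕ → V) (k : ℕ) (v : V) :
    ⟪reflSeq β k v, reflSeq β k v⟫ = ⟪v, v⟫ := by
  induction k generalizing v with
  | zero => rfl
  | succ k ih =>
    simp only [reflSeq]
    rw [ih]
    by_cases hb : ⟪β k, β k⟫ = 0
    · have hb0 : β k = 0 := inner_self_eq_zero.mp hb
      simp [hb0]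
    · unfold wPair
      rw [inner_sub_sub_self]
      rw [real_inner_smul_left, real_inner_smul_right, real_inner_smul_left,
        real_inner_smul_right, real_inner_comm (β k) v]
      field_simp
      ring

lemma reflSeq_inner_eq (β : ℕ → V) (lam : V) (j : ℕ) (v : V) :
    ⟪lam, reflSeq β j v⟫ =
      ⟪lam, v⟫ -
        ∑ k ∈ Finset.range j, wPair v (β k) * ⟪lam, reflSeq β k (β k)⟫ := by
  induction j generalizing v with
  | zero => simp [reflSeq]
  | succ j ih =>
    simp only [reflSeq]
    rw [reflSeq_sub_smul, inner_sub_right, real_inner_smul_right, ih v,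
      Finset.sum_range_succ]
    ring

end Aux

/-- Formula (3): the coordinates `xⱼ = (λ, s_{β₁}⋯s_{β_{j−1}}(βⱼ))` of the distinguished
vertex `p_I(λ)` of the Grossberg–Karshon cube solve the triangular linear system
`xⱼ + Σ_{i<j} (βᵢ, βⱼ) xᵢ = (λ, βⱼ)`. (Indices here are 0-based.) -/
theorem vertex_coords_solve_triangular_system
    (ℓ : ℕ) (V : Type*) [NormedAddCommGroup V] [InnerProductSpace ℝ V]
    [FiniteDimensional ℝ V] (hdim : Module.finrank ℝ V = ℓ)
    (β : ℕ → V) (hβ : ∀ i < ℓ, β i ≠ 0) (lam : V) :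
    ∀ j < ℓ,
      wPair lam (reflSeq β j (β j)) +
          ∑ i ∈ Finset.range j, wPair (β i) (β j) * wPair lam (reflSeq β i (β i)) =
        wPair lam (β j) := by
  intro j _
  have hx : ∀ i : ℕ, wPair lam (reflSeq β i (β i))
      = 2 * ⟪lam, reflSeq β i (β i)⟫ / ⟪β i, β i⟫ := by
    intro i
    unfold wPair
    rw [reflSeq_norm]
  simp only [hx]
  rw [reflSeq_inner_eq]
  have hsum :
      ∑ i ∈ Finset.range j,
          wPair (β i) (β j) * (2 * ⟪lam, reflSeq β i (β i)⟫ / ⟪β i, β i⟫)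
        = 2 * (∑ k ∈ Finset.range j,
            wPair (β j) (β k) * ⟪lam, reflSeq β k (β k)⟫) / ⟪β j, β j⟫ := by
    rw [Finset.mul_sum, Finset.sum_div]
    refine Finset.sum_congr rfl fun i _ => ?_
    unfold wPair
    rw [real_inner_comm (β i) (β j)]
    ring
  rw [hsum]
  unfold wPair
  ring
end

section
/- For real numbers a, b, c ≥ 0, the 3-dimensional Lebesgue measure of the polytope Δ₃(a,b,c) := {(u₁,u₂,u₃) ∈ ℝ³ : u₁, u₂, u₃ ≥ 0, u₁ ≤ a+b, u₃ ≤ c, u₂+u₃ ≤ b+c, u₁+u₂+u₃ ≤ a+b+c} equals c·(ab + b²/2) + (c²/2)·(a + b). -/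
open MeasureTheory

/-- The volume of the push-pull polytope `Δ₃(a,b,c) ⊂ ℝ³` equals
`c·(ab + b²/2) + (c²/2)·(a + b)`. -/
theorem volume_Delta3 (a b c : ℝ) (ha : 0 ≤ a) (hb : 0 ≤ b) (hc : 0 ≤ c) :
    (volume {u : Fin 3 → ℝ | 0 ≤ u 0 ∧ 0 ≤ u 1 ∧ 0 ≤ u 2 ∧ u 0 ≤ a + b ∧ u 2 ≤ c ∧
        u 1 + u 2 ≤ b + c ∧ u 0 + u 1 + u 2 ≤ a + b + c}).toReal =
      c * (a * b + b ^ 2 / 2) + c ^ 2 / 2 * (a + b) := by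
  -- the image set in ℝ × ℝ × ℝ, coordinates (u 0, u 2, u 1)
  set S : Set (ℝ × ℝ × ℝ) := {p | 0 ≤ p.1 ∧ 0 ≤ p.2.2 ∧ 0 ≤ p.2.1 ∧ p.1 ≤ a + b ∧
    p.2.1 ≤ c ∧ p.2.2 + p.2.1 ≤ b + c ∧ p.1 + p.2.2 + p.2.1 ≤ a + b + c} with hSdef
  have hSmeas : MeasurableSet S := by
    rw [hSdef]
    simp only [Set.setOf_and]
    repeat' apply MeasurableSet.inter
    all_goals exact measurableSet_le (by fun_prop) (by fun_prop)
  -- a measure preserving map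
  have mp : MeasurePreserving (fun u : Fin 3 → ℝ => (u 0, (u 2, u 1))) volume volume := by
    have mp1 := MeasureTheory.volume_preserving_piFinSuccAbove (fun _ : Fin 3 => ℝ) 0
    have mp2 := MeasureTheory.volume_preserving_finTwoArrow ℝ
    have mp3 : MeasurePreserving (Prod.swap : ℝ × ℝ → ℝ × ℝ) volume volume := by
      rw [Measure.volume_eq_prod ℝ ℝ]
      exact Measure.measurePreserving_swap
    have mp4 := ((MeasurePreserving.id (volume : Measure ℝ)).prod (mp3.comp mp2))
    have heq : (fun u : Fin 3 → ℝ => (u 0, (u 2, u 1)))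
        = (Prod.map id (Prod.swap ∘ ⇑(MeasurableEquiv.finTwoArrow (α := ℝ))))
          ∘ ⇑(MeasurableEquiv.piFinSuccAbove (fun _ : Fin 3 => ℝ) 0) := by
      funext u
      simp [MeasurableEquiv.piFinSuccAbove_apply, Fin.succAbove]
      exact ⟨rfl, rfl⟩
    rw [heq]
    exact mp4.comp mp1
  have hpre : {u : Fin 3 → ℝ | 0 ≤ u 0 ∧ 0 ≤ u 1 ∧ 0 ≤ u 2 ∧ u 0 ≤ a + b ∧ u 2 ≤ c ∧
      u 1 + u 2 ≤ b + c ∧ u 0 + u 1 + u 2 ≤ a + b + c}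
      = (fun u : Fin 3 → ℝ => (u 0, (u 2, u 1))) ⁻¹' S := rfl
  rw [hpre, mp.measure_preimage hSmeas.nullMeasurableSet]
  -- the slice length function
  set m : ℝ → ℝ := fun x => min (b + c) (a + b + c - x) with hm
  have hmc : ∀ x ∈ Set.Icc (0:ℝ) (a+b), c ≤ m x := by
    intro x hx
    exact le_min (by linarith) (by linarith [hx.2])
  -- the inner slices
  have hslice : ∀ x : ℝ, (volume : Measure (ℝ × ℝ)) (Prod.mk x ⁻¹' S)
      = Set.indicator (Set.Icc 0 (a+b))
          (fun x => ENNReal.ofReal (c * m x - c^2/2)) x := by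
    intro x
    by_cases hx : x ∈ Set.Icc (0:ℝ) (a+b)
    · rw [Set.indicator_of_mem hx]
      have hxc := hmc x hx
      rw [Measure.volume_eq_prod ℝ ℝ,
        Measure.prod_apply (hSmeas.preimage measurable_prodMk_left)]
      have hz : ∀ z : ℝ, (volume : Measure ℝ) (Prod.mk z ⁻¹' (Prod.mk x ⁻¹' S))
          = Set.indicator (Set.Icc 0 c) (fun z => ENNReal.ofReal (m x - z)) z := by
        intro z
        by_cases hzc : z ∈ Set.Icc (0:ℝ) c
        · rw [Set.indicator_of_mem hzc]
          have : Prod.mk z ⁻¹' (Prod.mk x ⁻¹' S) = Set.Icc 0 (m x - z) := by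
            ext y
            simp only [hSdef, Set.mem_preimage, Set.mem_setOf_eq, Set.mem_Icc]
            constructor
            · rintro ⟨-, hy, -, -, -, h1, h2⟩
              exact ⟨hy, le_sub_iff_add_le.2 (le_min (by linarith) (by linarith))⟩
            · rintro ⟨hy, hy2⟩
              have h1 := min_le_left (b + c) (a + b + c - x)
              have h2 := min_le_right (b + c) (a + b + c - x)
              rw [le_sub_iff_add_le] at hy2
              exact ⟨hx.1, hy, hzc.1, hx.2, hzc.2, by linarith, by linarith⟩
          rw [this, Real.volume_Icc]
          congr 1
          ring
        · rw [Set.indicator_of_notMem hzc]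
          convert measure_empty (μ := (volume : Measure ℝ))
          ext y
          simp only [hSdef, Set.mem_preimage, Set.mem_setOf_eq, Set.mem_empty_iff_false,
            iff_false]
          rintro ⟨-, -, h0, -, hcz, -, -⟩
          exact hzc ⟨h0, hcz⟩
      rw [lintegral_congr hz, lintegral_indicator measurableSet_Icc _]
      have hint : IntegrableOn (fun z => m x - z) (Set.Icc 0 c) volume :=
        (continuous_const.sub continuous_id).integrableOn_Icc
      rw [← ofReal_integral_eq_lintegral_ofReal hint
        (((ae_restrict_iff' measurableSet_Icc).2 (Filter.Eventually.of_forall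
          (fun z hz => by simp only [Pi.zero_apply]; linarith [hz.2]))))]
      congr 1
      rw [MeasureTheory.integral_Icc_eq_integral_Ioc, ← intervalIntegral.integral_of_le hc,
        intervalIntegral.integral_sub intervalIntegrable_const
          intervalIntegral.intervalIntegrable_id,
        intervalIntegral.integral_const, integral_id]
      simp only [smul_eq_mul]
      ring
    · rw [Set.indicator_of_notMem hx]
      convert measure_empty (μ := (volume : Measure (ℝ × ℝ)))
      ext q
      simp only [hSdef, Set.mem_preimage, Set.mem_setOf_eq, Set.mem_empty_iff_false, iff_false]
      rintro ⟨h0, -, -, hab, -, -, -⟩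
      exact hx ⟨h0, hab⟩
  rw [Measure.volume_eq_prod ℝ (ℝ × ℝ), Measure.prod_apply hSmeas, lintegral_congr hslice,
    lintegral_indicator measurableSet_Icc _]
  have hmcont : Continuous m := continuous_const.min (continuous_const.sub continuous_id)
  have hint2 : IntegrableOn (fun x => c * m x - c^2/2) (Set.Icc 0 (a+b)) volume :=
    ((continuous_const.mul hmcont).sub continuous_const).integrableOn_Icc
  rw [← ofReal_integral_eq_lintegral_ofReal hint2
    (((ae_restrict_iff' measurableSet_Icc).2 (Filter.Eventually.of_forall (fun x hx => by
        simp only [Pi.zero_apply]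
        have := hmc x hx
        nlinarith))))]
  have hab : (0:ℝ) ≤ a + b := by linarith
  rw [MeasureTheory.integral_Icc_eq_integral_Ioc, ← intervalIntegral.integral_of_le hab]
  have hi1 : IntervalIntegrable (fun x => c * m x - c^2/2) volume 0 a :=
    ((continuous_const.mul hmcont).sub continuous_const).intervalIntegrable _ _
  have hi2 : IntervalIntegrable (fun x => c * m x - c^2/2) volume a (a+b) :=
    ((continuous_const.mul hmcont).sub continuous_const).intervalIntegrable _ _
  rw [← intervalIntegral.integral_add_adjacent_intervals hi1 hi2]
  have e1 : ∫ x in (0:ℝ)..a, (c * m x - c^2/2) = a * (c * (b+c) - c^2/2) := by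
    rw [intervalIntegral.integral_congr (g := fun _ => c * (b+c) - c^2/2) ?_]
    · rw [intervalIntegral.integral_const]; simp
    · intro x hx
      rw [Set.uIcc_of_le ha, Set.mem_Icc] at hx
      simp only [hm]
      rw [min_eq_left (by linarith [hx.2])]
  have e2 : ∫ x in a..(a+b), (c * m x - c^2/2)
      = b * (c * (a+b+c) - c^2/2) - c * ((a+b)^2/2 - a^2/2) := by
    rw [intervalIntegral.integral_congr (g := fun x => (c * (a+b+c) - c^2/2) - c * x) ?_]
    · rw [intervalIntegral.integral_sub intervalIntegrable_const
        (intervalIntegral.intervalIntegrable_id.const_mul c),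
        intervalIntegral.integral_const, intervalIntegral.integral_const_mul,
        integral_id]
      simp only [smul_eq_mul]
      ring
    · intro x hx
      rw [Set.uIcc_of_le (by linarith), Set.mem_Icc] at hx
      simp only [hm]
      rw [min_eq_right (by linarith [hx.1])]
      ring
  rw [e1, e2]
  have hfin : a * (c * (b+c) - c^2/2) + (b * (c * (a+b+c) - c^2/2) - c * ((a+b)^2/2 - a^2/2))
      = c * (a * b + b ^ 2 / 2) + c ^ 2 / 2 * (a + b) := by ring
  rw [hfin, ENNReal.toReal_ofReal (by positivity)]
end

section
/- For real numbers a, b, c ≥ 0, let P' := {(u₁,u₂) ∈ ℝ² : u₁ ≥ 0, 0 ≤ u₂ ≤ b, u₁ + u₂ ≤ a+b} (a trapezoid) and let I := conv{(0,0),(0,1)}, so that P' + c·I = {(u₁,u₂) : u₁ ≥ 0, 0 ≤ u₂ ≤ b+c, u₁+u₂ ≤ a+b+c}. Then the convex hull of (P'×{c}) ∪ ((P'+c·I)×{0}) in ℝ³ (third coordinate u₃) equals Δ₃(a,b,c) := {(u₁,u₂,u₃) ∈ ℝ³ : u₁, u₂, u₃ ≥ 0, u₁ ≤ a+b, u₃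 ≤ c, u₂+u₃ ≤ b+c, u₁+u₂+u₃ ≤ a+b+c}. -/
open Pointwise

lemma seg_char_pushPull : convexHull ℝ ({((0:ℝ),(0:ℝ)),(0,1)} : Set (ℝ×ℝ)) =
    {v : ℝ × ℝ | v.1 = 0 ∧ 0 ≤ v.2 ∧ v.2 ≤ 1} := by
  rw [convexHull_pair]
  ext ⟨x, y⟩
  constructor
  · rintro ⟨s, t, hs, ht, hst, h⟩
    simp only [Prod.smul_mk, Prod.mk_add_mk, Prod.mk.injEq, smul_eq_mul] at h
    obtain ⟨h1, h2⟩ := h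
    refine ⟨by simp [← h1], by nlinarith, by nlinarith⟩
  · rintro ⟨h1, h2, h3⟩
    dsimp only at h1 h2 h3
    refine ⟨1 - y, y, by linarith, h2, by ring, ?_⟩
    simp only [Prod.smul_mk, Prod.mk_add_mk, smul_eq_mul, Prod.mk.injEq]
    exact ⟨by rw [h1]; ring, by ring⟩

/-- The push-pull polytope over the trapezoid
`P' = {(u₁,u₂) : u₁ ≥ 0, 0 ≤ u₂ ≤ b, u₁ + u₂ ≤ a+b}` at height `c`, with truncating sum
`P' + c·I` for the vertical unit segment `I`, equals `Δ₃(a,b,c)`. -/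
theorem pushPull_trapezoid_eq_Delta3 (a b c : ℝ) (ha : 0 ≤ a) (hb : 0 ≤ b) (hc : 0 ≤ c) :
    convexHull ℝ
        (({u : ℝ × ℝ | 0 ≤ u.1 ∧ 0 ≤ u.2 ∧ u.2 ≤ b ∧ u.1 + u.2 ≤ a + b} ×ˢ
            ({c} : Set ℝ)) ∪
          (({u : ℝ × ℝ | 0 ≤ u.1 ∧ 0 ≤ u.2 ∧ u.2 ≤ b ∧ u.1 + u.2 ≤ a + b} +
              c • convexHull ℝ ({((0 : ℝ), (0 : ℝ)), (0, 1)} : Set (ℝ × ℝ))) ×ˢ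
            ({0} : Set ℝ))) =
      {p : (ℝ × ℝ) × ℝ | 0 ≤ p.1.1 ∧ 0 ≤ p.1.2 ∧ 0 ≤ p.2 ∧ p.1.1 ≤ a + b ∧ p.2 ≤ c ∧
        p.1.2 + p.2 ≤ b + c ∧ p.1.1 + p.1.2 + p.2 ≤ a + b + c} := by
  rw [seg_char_pushPull]
  apply le_antisymm
  · apply convexHull_min
    · rintro ⟨⟨u1, u2⟩, u3⟩ (⟨⟨h1, h2, h3, h4⟩, hu3⟩ | ⟨hu, hu3⟩)
      · rcases hu3 with rfl
        exact ⟨h1, h2, hc, by linarith, le_refl _, by linarith, by linarith⟩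
      · rcases hu3 with rfl
        obtain ⟨w, ⟨h1, h2, h3, h4⟩, z, hz, hwz⟩ := hu
        obtain ⟨z', ⟨hz1, hz2, hz3⟩, rfl⟩ := hz
        have e1 : u1 = w.1 + c * z'.1 := by
          have := congrArg Prod.fst hwz; simpa using this.symm
        have e2 : u2 = w.2 + c * z'.2 := by
          have := congrArg Prod.snd hwz; simpa using this.symm
        have hcz : 0 ≤ c * z'.2 := mul_nonneg hc hz2
        have hcz' : c * z'.2 ≤ c := by nlinarith
        refine ⟨by rw [e1, hz1]; simpa using h1, by rw [e2]; positivity, le_refl _, ?_, hc, ?_, ?_⟩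
        · rw [e1, hz1]; simp; linarith
        · rw [e2]; simp; linarith
        · rw [e1, e2, hz1]; simp; linarith
    · rintro ⟨⟨x1, x2⟩, x3⟩ ⟨p1, p2, p3, p4, p5, p6, p7⟩ ⟨⟨y1, y2⟩, y3⟩
        ⟨q1, q2, q3, q4, q5, q6, q7⟩ α β hα hβ hαβ
      dsimp only at *
      simp only [Prod.smul_mk, Prod.mk_add_mk, smul_eq_mul, Set.mem_setOf_eq]
      refine ⟨by nlinarith, by nlinarith, by nlinarith, by nlinarith, by nlinarith,
        by nlinarith, by nlinarith⟩
  · rintro ⟨⟨u1, u2⟩, u3⟩ ⟨h1, h2, h3, h4, h5, h6, h7⟩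
    dsimp only at *
    set A := ({u : ℝ × ℝ | 0 ≤ u.1 ∧ 0 ≤ u.2 ∧ u.2 ≤ b ∧ u.1 + u.2 ≤ a + b} ×ˢ
        ({c} : Set ℝ)) with hA
    set B := (({u : ℝ × ℝ | 0 ≤ u.1 ∧ 0 ≤ u.2 ∧ u.2 ≤ b ∧ u.1 + u.2 ≤ a + b} +
        c • {v : ℝ × ℝ | v.1 = 0 ∧ 0 ≤ v.2 ∧ v.2 ≤ 1}) ×ˢ ({0} : Set ℝ)) with hB
    -- membership helper for B
    have memB : ∀ v1 v2 t : ℝ, 0 ≤ v1 → 0 ≤ v2 → v2 ≤ b → v1 + v2 ≤ a + b →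
        0 ≤ t → t ≤ c → ((v1, v2 + t), (0:ℝ)) ∈ B := by
      intro v1 v2 t hv1 hv2 hv2b hvab ht htc
      refine ⟨⟨(v1, v2), ⟨hv1, hv2, hv2b, hvab⟩, (0, t), ?_, by simp⟩, rfl⟩
      rcases eq_or_lt_of_le hc with hc0 | hc0
      · have : t = 0 := le_antisymm (by linarith) ht
        refine ⟨(0, 0), ⟨rfl, le_refl _, zero_le_one⟩, ?_⟩
        simp [this, Prod.ext_iff]
      · refine ⟨(0, t / c), ⟨rfl, by positivity, by rw [div_le_one hc0]; exact htc⟩, ?_⟩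
        simp only [Prod.smul_mk, smul_eq_mul, Prod.mk.injEq]
        constructor
        · ring
        · field_simp
    set M := min b (a + b - u1) with hM
    have hM0 : 0 ≤ M := le_min hb (by linarith)
    have hMb : M ≤ b := min_le_left _ _
    have hMa : M ≤ a + b - u1 := min_le_right _ _
    by_cases hu2 : u2 ≤ M
    · -- p is on the segment between ((u1,u2),c) ∈ A and ((u1,u2),0) ∈ B
      have hxA : ((u1, u2), c) ∈ A ∪ B :=
        Or.inl ⟨⟨h1, h2, hu2.trans hMb, by linarith [hu2.trans hMa]⟩, rfl⟩
      have hyB : ((u1, u2), (0:ℝ)) ∈ A ∪ B := by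
        refine Or.inr ?_
        have := memB u1 u2 0 h1 h2 (hu2.trans hMb) (by linarith [hu2.trans hMa]) le_rfl hc
        simpa using this
      rcases eq_or_lt_of_le hc with hc0 | hc0
      · have hu30 : u3 = 0 := le_antisymm (by linarith) h3
        rw [hu30]
        exact subset_convexHull ℝ _ hyB
      · have key : (((u1, u2), u3) : (ℝ × ℝ) × ℝ) =
            (u3 / c) • ((u1, u2), c) + (1 - u3 / c) • ((u1, u2), 0) := by
          simp only [Prod.smul_mk, Prod.mk_add_mk, smul_eq_mul, Prod.mk.injEq]
          refine ⟨⟨by ring, by ring⟩, ?_⟩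
          field_simp
          ring
        rw [key]
        exact (convex_convexHull ℝ (A ∪ B)) (subset_convexHull ℝ _ hxA)
          (subset_convexHull ℝ _ hyB) (by positivity)
          (by rw [sub_nonneg, div_le_one hc0]; exact h5) (by ring)
    · -- u2 > M, so u3 < c; segment between ((u1,M),c) ∈ A and ((u1, M + t),0) ∈ B
      push_neg at hu2
      have hc0 : 0 < c := by
        rcases eq_or_lt_of_le hc with h | h
        · exfalso
          have hu30 : u3 = 0 := le_antisymm (by linarith) h3
          have : u2 ≤ M := le_min (by linarith) (by linarith)
          linarith
        · exact h
      have hu3c : u3 < c := by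
        rcases eq_or_lt_of_le h5 with h | h
        · exfalso
          have : u2 ≤ M := le_min (by linarith) (by linarith)
          linarith
        · exact h
      set lam := u3 / c with hlam
      have hlam0 : 0 ≤ lam := by positivity
      have hlam1 : lam < 1 := by rw [hlam, div_lt_one hc0]; exact hu3c
      have hclam : c * (1 - lam) = c - u3 := by rw [hlam]; field_simp
      set t := (u2 - M) / (1 - lam) with ht
      have ht0 : 0 ≤ t := div_nonneg (by linarith) (by linarith)
      have htc : t ≤ c := by
        rw [ht, div_le_iff₀ (by linarith)]
        have h1M : M = b ∨ M = a + b - u1 := by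
          rcases le_total b (a + b - u1) with h | h
          · left; rw [hM, min_eq_left h]
          · right; rw [hM, min_eq_right h]
        rcases h1M with h | h <;> rw [h] <;> linarith [hclam]
      have hxA : ((u1, M), c) ∈ A ∪ B :=
        Or.inl ⟨⟨h1, hM0, hMb, by linarith⟩, rfl⟩
      have hyB : ((u1, M + t), (0:ℝ)) ∈ A ∪ B :=
        Or.inr (memB u1 M t h1 hM0 hMb (by linarith) ht0 htc)
      have key : (((u1, u2), u3) : (ℝ × ℝ) × ℝ) =
          lam • ((u1, M), c) + (1 - lam) • ((u1, M + t), 0) := by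
        simp only [Prod.smul_mk, Prod.mk_add_mk, smul_eq_mul, Prod.mk.injEq]
        refine ⟨⟨by ring, ?_⟩, ?_⟩
        · have hne : (1:ℝ) - lam ≠ 0 := ne_of_gt (by linarith)
          rw [ht]
          field_simp
          ring
        · rw [hlam]; field_simp; ring
      rw [key]
      exact (convex_convexHull ℝ (A ∪ B)) (subset_convexHull ℝ _ hxA)
        (subset_convexHull ℝ _ hyB) hlam0 (by linarith) (by ring)
end

section
/- For real numbers a, b, c, d ≥ 0, the convex hull in ℝ⁴ of (Δ₃(a,b,c)×{d}) ∪ (Δ₃(a,b+d,c)×{0}) (fourth coordinate u₄) equals Δ₄(a,b,c,d) := {(u₁,u₂,u₃,u₄) ∈ ℝ⁴ : u₁, u₂, u₃, u₄ ≥ 0, u₃ ≤ c, u₄ ≤ d, u₁+u₄ ≤ a+b+d, u₂+u₃+u₄ ≤ b+c+d, u₁+u₂+u₃+u₄ ≤ a+b+c+d}. -/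
/-- The polytope `Δ₃(a,b,c) ⊂ ℝ³`. -/
def Delta3 (a b c : ℝ) : Set (Fin 3 → ℝ) :=
  {u | 0 ≤ u 0 ∧ 0 ≤ u 1 ∧ 0 ≤ u 2 ∧ u 0 ≤ a + b ∧ u 2 ≤ c ∧ u 1 + u 2 ≤ b + c ∧
    u 0 + u 1 + u 2 ≤ a + b + c}

/-- Any point of `Δ₃(a,b+s,c)` is a point of `Δ₃(a,b,c)` plus a small nonnegative
vector supported on the first two coordinates. -/
lemma Delta3_summand (a b c s : ℝ) (ha : 0 ≤ a) (hb : 0 ≤ b) (hs : 0 ≤ s)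
    (u : Fin 3 → ℝ) (hu : u ∈ Delta3 a (b + s) c) :
    ∃ w0 w1 : ℝ, 0 ≤ w0 ∧ 0 ≤ w1 ∧ w0 + w1 ≤ s ∧
      (fun i => u i - ![w0, w1, 0] i) ∈ Delta3 a b c := by
  simp only [Delta3, Set.mem_setOf_eq] at hu ⊢
  obtain ⟨h0, h1, h2, h3, h4, h5, h6⟩ := hu
  set w1 := max (u 1 + u 2 - (b + c)) 0 with hw1
  set w0 := max (u 0 - (a + b)) (max (u 0 + u 1 + u 2 - (a + b + c) - w1) 0) with hw0
  refine ⟨w0, w1, ?_, ?_, ?_, ?_, ?_, ?_, ?_, ?_, ?_, ?_⟩ <;> (try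
    simp only [Matrix.cons_val_zero, Matrix.cons_val_one, Matrix.head_cons,
      Matrix.cons_val_two, Matrix.tail_cons]) <;>
    rcases max_cases (u 1 + u 2 - (b + c)) 0 with ⟨e1, f1⟩ | ⟨e1, f1⟩ <;>
    rcases max_cases (u 0 - (a + b)) (max (u 0 + u 1 + u 2 - (a + b + c) - w1) 0) with
      ⟨e0, f0⟩ | ⟨e0, f0⟩ <;>
    rcases max_cases (u 0 + u 1 + u 2 - (a + b + c) - w1) 0 with ⟨e2, f2⟩ | ⟨e2, f2⟩ <;>
    rw [hw1] at * <;> linarith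

/-- A convex combination of two numbers bounded above by `K` is bounded above by `K`. -/
lemma comb_le {s t x y K : ℝ} (hs : 0 ≤ s) (ht : 0 ≤ t) (hst : s + t = 1)
    (hx : x ≤ K) (hy : y ≤ K) : s * x + t * y ≤ K := by
  calc s * x + t * y ≤ s * K + t * K :=
        add_le_add (mul_le_mul_of_nonneg_left hx hs) (mul_le_mul_of_nonneg_left hy ht)
    _ = K := by rw [← add_mul, hst, one_mul]

/-- The push-pull polytope `conv((Δ₃(a,b,c) × {d}) ∪ (Δ₃(a,b+d,c) × {0}))` equals
`Δ₄(a,b,c,d)` (fourth coordinate `u₄` is the height). -/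
theorem pushPull_Delta3_eq_Delta4 (a b c d : ℝ)
    (ha : 0 ≤ a) (hb : 0 ≤ b) (hc : 0 ≤ c) (hd : 0 ≤ d) :
    convexHull ℝ
        ((Delta3 a b c ×ˢ ({d} : Set ℝ)) ∪ (Delta3 a (b + d) c ×ˢ ({0} : Set ℝ))) =
      {p : (Fin 3 → ℝ) × ℝ | 0 ≤ p.1 0 ∧ 0 ≤ p.1 1 ∧ 0 ≤ p.1 2 ∧ 0 ≤ p.2 ∧
        p.1 2 ≤ c ∧ p.2 ≤ d ∧ p.1 0 + p.2 ≤ a + b + d ∧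
        p.1 1 + p.1 2 + p.2 ≤ b + c + d ∧
        p.1 0 + p.1 1 + p.1 2 + p.2 ≤ a + b + c + d} := by
  apply Set.Subset.antisymm
  · apply convexHull_min
    · rintro ⟨u, t⟩ (⟨hu, ht⟩ | ⟨hu, ht⟩) <;>
        simp only [Set.mem_singleton_iff] at ht <;> subst ht <;>
        obtain ⟨h0, h1, h2, h3, h4, h5, h6⟩ := hu <;>
        dsimp only [Set.mem_setOf_eq] at * <;>
        exact ⟨h0, h1, h2, by linarith, h4, by linarith, by linarith, by linarith, by linarith⟩
    · rintro p hp q hq s t hs ht hst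
      obtain ⟨p0, p1, p2, p3, p4, p5, p6, p7, p8⟩ := hp
      obtain ⟨q0, q1, q2, q3, q4, q5, q6, q7, q8⟩ := hq
      simp only [Set.mem_setOf_eq, Prod.fst_add, Prod.snd_add, Prod.smul_fst, Prod.smul_snd,
        Pi.add_apply, Pi.smul_apply, smul_eq_mul]
      refine ⟨?_, ?_, ?_, ?_, ?_, ?_, ?_, ?_, ?_⟩
      · exact add_nonneg (mul_nonneg hs p0) (mul_nonneg ht q0)
      · exact add_nonneg (mul_nonneg hs p1) (mul_nonneg ht q1)
      · exact add_nonneg (mul_nonneg hs p2) (mul_nonneg ht q2)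
      · exact add_nonneg (mul_nonneg hs p3) (mul_nonneg ht q3)
      · exact comb_le hs ht hst p4 q4
      · exact comb_le hs ht hst p5 q5
      · linarith [comb_le hs ht hst p6 q6]
      · linarith [comb_le hs ht hst p7 q7]
      · linarith [comb_le hs ht hst p8 q8]
  · rintro ⟨u, t⟩ ⟨h0, h1, h2, h3, h4, h5, h6, h7, h8⟩
    dsimp only [Set.mem_setOf_eq] at *
    rcases eq_or_lt_of_le h5 with hteq | htlt
    · -- t = d : the point lies in the top face
      apply subset_convexHull
      left
      refine ⟨⟨h0, h1, h2, by linarith, h4, by linarith, by linarith⟩, ?_⟩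
      simp [hteq]
    · -- t < d
      have hs : (0:ℝ) < d - t := by linarith
      have hu' : u ∈ Delta3 a (b + (d - t)) c :=
        ⟨h0, h1, h2, by linarith, h4, by linarith, by linarith⟩
      obtain ⟨w0, w1, hw0, hw1, hws, hx⟩ :=
        Delta3_summand a b c (d - t) ha hb (le_of_lt hs) u hu'
      obtain ⟨x0, x1, x2, x3, x4, x5, x6⟩ := hx
      set x : Fin 3 → ℝ := fun i => u i - ![w0, w1, 0] i with hxdef
      set y : Fin 3 → ℝ := fun i => x i + (d / (d - t)) * ![w0, w1, 0] i with hydef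
      have hdpos : (0:ℝ) < d := by linarith
      have hdiv : 0 ≤ d / (d - t) := le_of_lt (div_pos hdpos hs)
      have hmulw : (d / (d - t)) * (w0 + w1) ≤ d := by
        rw [div_mul_eq_mul_div, div_le_iff₀ hs]
        nlinarith
      simp only [hxdef, Matrix.cons_val_zero, Matrix.cons_val_one, Matrix.head_cons,
        Matrix.cons_val_two, Matrix.tail_cons] at x0 x1 x2 x3 x4 x5 x6
      have hxmem : x ∈ Delta3 a b c := by
        refine ⟨?_, ?_, ?_, ?_, ?_, ?_, ?_⟩ <;>
          simp only [hxdef, Matrix.cons_val_zero, Matrix.cons_val_one, Matrix.head_cons,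
            Matrix.cons_val_two, Matrix.tail_cons] <;> linarith
      have hy : y ∈ Delta3 a (b + d) c := by
        have m0 : 0 ≤ (d / (d - t)) * w0 := mul_nonneg hdiv hw0
        have m1 : 0 ≤ (d / (d - t)) * w1 := mul_nonneg hdiv hw1
        refine ⟨?_, ?_, ?_, ?_, ?_, ?_, ?_⟩ <;>
          simp only [hydef, hxdef, Matrix.cons_val_zero, Matrix.cons_val_one, Matrix.head_cons,
            Matrix.cons_val_two, Matrix.tail_cons, mul_zero, add_zero] <;> linarith
      have hcomb := (convex_convexHull ℝ
          ((Delta3 a b c ×ˢ ({d} : Set ℝ)) ∪ (Delta3 a (b + d) c ×ˢ ({0} : Set ℝ))))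
        (subset_convexHull ℝ _
          (Or.inl (⟨hxmem, rfl⟩ : ((x, d) : (Fin 3 → ℝ) × ℝ) ∈ Delta3 a b c ×ˢ ({d} : Set ℝ))))
        (subset_convexHull ℝ _
          (Or.inr (⟨hy, rfl⟩ :
            ((y, (0:ℝ)) : (Fin 3 → ℝ) × ℝ) ∈ Delta3 a (b + d) c ×ˢ ({0} : Set ℝ))))
        (div_nonneg h3 (le_of_lt hdpos)) (div_nonneg (le_of_lt hs) (le_of_lt hdpos))
        (by field_simp; ring)
      have hne : d - t ≠ 0 := ne_of_gt hs
      have hdne : d ≠ 0 := ne_of_gt hdpos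
      have hpe : ((u, t) : (Fin 3 → ℝ) × ℝ) =
          (t / d) • ((x, d) : (Fin 3 → ℝ) × ℝ) + ((d - t) / d) • ((y, 0) : (Fin 3 → ℝ) × ℝ) := by
        refine Prod.ext ?_ ?_
        · funext i
          simp only [Prod.fst_add, Prod.smul_fst, Pi.add_apply, Pi.smul_apply, smul_eq_mul,
            hydef, hxdef]
          field_simp
          ring
        · simp only [Prod.snd_add, Prod.smul_snd, smul_eq_mul, mul_zero, add_zero]
          field_simp
      rw [hpe]
      exact hcomb
end
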